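/- arXiv:1709.05003 — 2 statements merged into one kernel-verified Lean document; each statement's English description precedes it below -/
import Mathlib

section
/- For all integers n ≥ 3 and r ≥ 3, the multicolour Ramsey numbers satisfy R_r(n, …, n) ≥ R_{r−1}(n, …, n) + n. -/
open SimpleGraph

/-- The vertex-disjoint union `K_n + K_m` of two complete graphs. -/
def cliqueSum (n m : ℕ) : SimpleGraph (Fin n ⊕ Fin m) :=
  SimpleGraph.fromRel fun x y =>
    (∃ a b, x = Sum.inl a ∧ y = Sum.inl b) ∨ (∃ a b, x = Sum.inr a ∧ y = Sum.inr b)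

/-- There is a copy of `H` in `G` that is monochromatic in colour `i`
under the edge-colouring `c`. -/
def MonoCopy {V W : Type*} {r : ℕ} (G : SimpleGraph V) (H : SimpleGraph W)
    (c : Sym2 V → Fin r) (i : Fin r) : Prop :=
  ∃ f : H →g G, Function.Injective f ∧ ∀ u v, H.Adj u v → c s(f u, f v) = i

/-- `G` is `r`-Ramsey for `H`: every `r`-colouring of the edges of `G`
admits a monochromatic copy of `H`. -/
def IsRamseyFor {V W : Type*} (r : ℕ) (G : SimpleGraph V) (H : SimpleGraph W) : Prop :=
  ∀ c : Sym2 V → Fin r, ∃ i : Fin r, MonoCopy G H c i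

/-- `G₁` and `G₂` are `r`-Ramsey equivalent. -/
def RamseyEquiv {V W : Type*} (r : ℕ) (G₁ : SimpleGraph V) (G₂ : SimpleGraph W) : Prop :=
  ∀ {U : Type*} (G : SimpleGraph U), IsRamseyFor r G G₁ ↔ IsRamseyFor r G G₂

/-- `N` has the Ramsey property for clique sizes `n : Fin r → ℕ`: every `r`-colouring of
the edges of `K_N` admits a colour `i` and an `i`-monochromatic clique of size `n i`. -/
def HasRamseyProp (N : ℕ) {r : ℕ} (n : Fin r → ℕ) : Prop :=
  ∀ c : Sym2 (Fin N) → Fin r, ∃ i : Fin r, ∃ s : Finset (Fin N),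
    s.card = n i ∧ ∀ u ∈ s, ∀ v ∈ s, u ≠ v → c s(u, v) = i

/-- The Ramsey number `R_r(n 0, …, n (r-1))`. -/
noncomputable def ramseyNumber {r : ℕ} (n : Fin r → ℕ) : ℕ :=
  sInf {N | HasRamseyProp N n}


open Finset in
lemma ramsey_exists_aux : ∀ (k r : ℕ) (n : Fin r → ℕ), (∑ i, n i) = k →
    ∃ N : ℕ, ∀ (V : Type) [DecidableEq V] (c : V → V → Fin r),
      (∀ a b, c a b = c b a) → ∀ A : Finset V, N ≤ A.card →
      ∃ i : Fin r, ∃ s : Finset V, s ⊆ A ∧ s.card = n i ∧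
        ∀ u ∈ s, ∀ v ∈ s, u ≠ v → c u v = i := by
  intro k
  induction k with
  | zero =>
    intro r n hsum
    rcases Nat.eq_zero_or_pos r with hr | hr
    · refine ⟨1, fun V _ c hc A hA => ?_⟩
      obtain ⟨a, ha⟩ := Finset.card_pos.mp (show 0 < A.card by omega)
      subst hr
      exact (c a a).elim0
    · have hz : ∀ i, n i = 0 := by
        intro i
        have := Finset.sum_eq_zero_iff.mp hsum i (mem_univ i)
        exact this
      exact ⟨0, fun V _ c hc A hA =>
        ⟨⟨0, hr⟩, ∅, by simp [hz]⟩⟩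
  | succ k ih =>
    intro r n hsum
    by_cases h0 : ∃ i, n i = 0
    · obtain ⟨i, hi⟩ := h0
      exact ⟨0, fun V _ c hc A hA => ⟨i, ∅, by simp [hi]⟩⟩
    push_neg at h0
    have hr : 0 < r := by
      rcases Nat.eq_zero_or_pos r with h | h
      · subst h; simp at hsum
      · exact h
    have hupd : ∀ i : Fin r, (∑ j, Function.update n i (n i - 1) j) = k := by
      intro i
      rw [Finset.sum_update_of_mem (mem_univ i)]
      have h1 : (∑ j ∈ univ \ {i}, n j) + n i = k + 1 := by
        rw [← Finset.sum_eq_sum_sdiff_singleton_add (mem_univ i)]; exact hsum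
      have h2 : 1 ≤ n i := Nat.one_le_iff_ne_zero.mpr (h0 i)
      omega
    choose N hN using fun i => ih r (Function.update n i (n i - 1)) (hupd i)
    refine ⟨(∑ i, N i) + 2, fun V _ c hc A hA => ?_⟩
    obtain ⟨v, hv⟩ := Finset.card_pos.mp (show 0 < A.card by omega)
    set B := A.erase v with hBdef
    have hBcard : (∑ i, N i) + 1 ≤ B.card := by
      rw [hBdef, Finset.card_erase_of_mem hv]; omega
    have hpart : B.card = ∑ i : Fin r, (B.filter fun u => c v u = i).card :=
      Finset.card_eq_sum_card_fiberwise (fun x _ => mem_univ _)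
    have hex : ∃ i : Fin r, N i ≤ (B.filter fun u => c v u = i).card := by
      by_contra hlt
      push_neg at hlt
      have hle : ∀ i ∈ (univ : Finset (Fin r)),
          (B.filter fun u => c v u = i).card + 1 ≤ N i := fun i _ => hlt i
      have := Finset.sum_le_sum hle
      rw [Finset.sum_add_distrib] at this
      simp only [Finset.sum_const, Finset.card_univ, Fintype.card_fin, smul_eq_mul,
        mul_one] at this
      omega
    obtain ⟨i, hi⟩ := hex
    obtain ⟨j, s, hsub, hcard, hmono⟩ := hN i V c hc _ hi
    have hsubB : s ⊆ B := hsub.trans (Finset.filter_subset _ _)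
    have hsubA : s ⊆ A := hsubB.trans (Finset.erase_subset _ _)
    by_cases hji : j = i
    · subst hji
      rw [Function.update_self] at hcard
      have hvs : v ∉ s := fun h => (Finset.mem_erase.mp (hsubB h)).1 rfl
      refine ⟨j, insert v s, ?_, ?_, ?_⟩
      · exact Finset.insert_subset hv hsubA
      · rw [Finset.card_insert_of_notMem hvs, hcard]
        have := h0 j; omega
      · intro u hu w hw huw
        have hcol : ∀ x ∈ s, c v x = j := fun x hx =>
          (Finset.mem_filter.mp (hsub hx)).2
        rcases Finset.mem_insert.mp hu with rfl | hu'
        · rcases Finset.mem_insert.mp hw with rfl | hw'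
          · exact absurd rfl huw
          · exact hcol w hw'
        · rcases Finset.mem_insert.mp hw with rfl | hw'
          · rw [hc]; exact hcol u hu'
          · exact hmono u hu' w hw' huw
    · rw [Function.update_of_ne hji] at hcard
      exact ⟨j, s, hsubA, hcard, hmono⟩

lemma exists_hasRamseyProp (r : ℕ) (n : Fin r → ℕ) : ∃ N, HasRamseyProp N n := by
  obtain ⟨N, hN⟩ := ramsey_exists_aux (∑ i, n i) r n rfl
  refine ⟨N, fun c => ?_⟩
  obtain ⟨i, s, _, hcard, hmono⟩ := hN (Fin N) (fun u v => c s(u, v))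
    (fun a b => show c s(a, b) = c s(b, a) by rw [Sym2.eq_swap]) Finset.univ (by simp)
  exact ⟨i, s, hcard, hmono⟩

lemma hasRamseyProp_mono {N N' r : ℕ} {n : Fin r → ℕ} (h : HasRamseyProp N n)
    (hle : N ≤ N') : HasRamseyProp N' n := by
  intro c
  obtain ⟨i, s, hcard, hmono⟩ := h (fun e => c (e.map (Fin.castLE hle)))
  refine ⟨i, s.map ⟨Fin.castLE hle, Fin.castLE_injective hle⟩, by simp [hcard], ?_⟩
  intro u hu v hv huv
  simp only [Finset.mem_map, Function.Embedding.coeFn_mk] at hu hv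
  obtain ⟨a, ha, rfl⟩ := hu
  obtain ⟨b, hb, rfl⟩ := hv
  have hab : a ≠ b := fun h' => huv (by rw [h'])
  have := hmono a ha b hb hab
  rwa [Sym2.map_pair_eq] at this

lemma not_hasRamseyProp_zero {r n : ℕ} (hr : 0 < r) (hn : 0 < n) :
    ¬ HasRamseyProp 0 (fun _ : Fin r => n) := by
  intro h
  obtain ⟨i, s, hcard, -⟩ := h (fun _ => ⟨0, hr⟩)
  have h1 : s.card = n := hcard
  have h2 : s.card ≤ 0 := le_trans (Finset.card_le_univ s) (by simp)
  omega

/-- The bad colouring on `M + n` vertices. -/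
def badCol (M n r : ℕ) (hr : 2 ≤ r) (c0 : Sym2 (Fin M) → Fin (r - 1))
    (u v : Fin (M + n)) : Fin r :=
  if hu : (u : ℕ) < M then
    if hv : (v : ℕ) < M then Fin.castLE (Nat.sub_le r 1) (c0 s(⟨u, hu⟩, ⟨v, hv⟩))
    else ⟨r - 1, by omega⟩
  else if (v : ℕ) < M then ⟨r - 1, by omega⟩
  else if ((u : ℕ) = M ∧ (v : ℕ) = M + 1) ∨ ((v : ℕ) = M ∧ (u : ℕ) = M + 1) then
    ⟨0, by omega⟩
  else ⟨1, by omega⟩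

lemma badCol_symm (M n r : ℕ) (hr : 2 ≤ r) (c0 : Sym2 (Fin M) → Fin (r - 1))
    (u v : Fin (M + n)) : badCol M n r hr c0 u v = badCol M n r hr c0 v u := by
  unfold badCol
  split_ifs <;> first
    | rfl
    | omega
    | (rw [Sym2.eq_swap])
    | tauto

lemma badCol_oo (M n r : ℕ) (hr : 2 ≤ r) (c0 : Sym2 (Fin M) → Fin (r - 1))
    (u v : Fin (M + n)) (hu : (u : ℕ) < M) (hv : (v : ℕ) < M) :
    badCol M n r hr c0 u v = Fin.castLE (Nat.sub_le r 1) (c0 s(⟨u, hu⟩, ⟨v, hv⟩)) := by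
  unfold badCol; rw [dif_pos hu, dif_pos hv]

lemma badCol_on_val (M n r : ℕ) (hr : 2 ≤ r) (c0 : Sym2 (Fin M) → Fin (r - 1))
    (u v : Fin (M + n)) (hu : (u : ℕ) < M) (hv : ¬ (v : ℕ) < M) :
    (badCol M n r hr c0 u v : ℕ) = r - 1 := by
  unfold badCol; rw [dif_pos hu, dif_neg hv]

lemma badCol_nn (M n r : ℕ) (hr : 2 ≤ r) (c0 : Sym2 (Fin M) → Fin (r - 1))
    (u v : Fin (M + n)) (hu : ¬ (u : ℕ) < M) (hv : ¬ (v : ℕ) < M) :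
    badCol M n r hr c0 u v =
      if ((u : ℕ) = M ∧ (v : ℕ) = M + 1) ∨ ((v : ℕ) = M ∧ (u : ℕ) = M + 1) then
        ⟨0, by omega⟩ else ⟨1, by omega⟩ := by
  unfold badCol; rw [dif_neg hu, if_neg hv]

lemma badCol_nn_le (M n r : ℕ) (hr : 2 ≤ r) (c0 : Sym2 (Fin M) → Fin (r - 1))
    (u v : Fin (M + n)) (hu : ¬ (u : ℕ) < M) (hv : ¬ (v : ℕ) < M) :
    (badCol M n r hr c0 u v : ℕ) ≤ 1 := by
  rw [badCol_nn M n r hr c0 u v hu hv]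
  split_ifs <;> simp

lemma key_not_ramsey (M n r : ℕ) (hn : 3 ≤ n) (hr : 3 ≤ r)
    (hM : ¬ HasRamseyProp M (fun _ : Fin (r - 1) => n)) :
    ¬ HasRamseyProp (M + n) (fun _ : Fin r => n) := by
  intro hcon
  unfold HasRamseyProp at hM
  push_neg at hM
  obtain ⟨c0, hc0⟩ := hM
  have hr1 : 2 ≤ r := by omega
  obtain ⟨i, s, hcard', hmono'⟩ := hcon (Sym2.lift ⟨badCol M n r hr1 c0,
    badCol_symm M n r hr1 c0⟩)
  have hcard : s.card = n := hcard'
  have hmono : ∀ u ∈ s, ∀ v ∈ s, u ≠ v → badCol M n r hr1 c0 u v = i := by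
    intro u hu v hv huv
    have := hmono' u hu v hv huv
    rwa [Sym2.lift_mk] at this
  by_cases hOld : ∀ x ∈ s, (x : ℕ) < M
  · -- all vertices old: contradicts badness of c0
    have h2 : 1 < s.card := by omega
    obtain ⟨x0, hx0, y0, hy0, hxy0⟩ := Finset.one_lt_card.mp h2
    have hival : (i : ℕ) < r - 1 := by
      have h := hmono x0 hx0 y0 hy0 hxy0
      rw [badCol_oo M n r hr1 c0 x0 y0 (hOld x0 hx0) (hOld y0 hy0)] at h
      have h' := congrArg Fin.val h
      simp only [Fin.coe_castLE] at h'
      have := (c0 s(⟨x0, hOld x0 hx0⟩, ⟨y0, hOld y0 hy0⟩)).isLt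
      omega
    have hinj : Function.Injective
        (fun x : {z // z ∈ s} => (⟨(x : Fin (M + n)).val, hOld x.1 x.2⟩ : Fin M)) := by
      intro a b h
      simp only [Fin.mk.injEq] at h
      exact Subtype.ext (Fin.ext h)
    obtain ⟨u, hu, v, hv, huv, hne⟩ := hc0 ⟨(i : ℕ), hival⟩
      (s.attach.map ⟨_, hinj⟩) (by rw [Finset.card_map, Finset.card_attach]; exact hcard)
    simp only [Finset.mem_map, Finset.mem_attach, Function.Embedding.coeFn_mk,
      true_and] at hu hv
    obtain ⟨⟨x, hx⟩, rfl⟩ := hu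
    obtain ⟨⟨y, hy⟩, rfl⟩ := hv
    have hxy : x ≠ y := by
      intro h; apply huv; subst h; rfl
    have h := hmono x hx y hy hxy
    rw [badCol_oo M n r hr1 c0 x y (hOld x hx) (hOld y hy)] at h
    exact hne (Fin.ext (by simpa using congrArg Fin.val h))
  · push_neg at hOld
    obtain ⟨y, hy, hyM⟩ := hOld
    by_cases hNew : ∀ x ∈ s, ¬ (x : ℕ) < M
    · -- all vertices new: s is exactly the set of new vertices
      have hTcard : (Finset.univ.filter (fun z : Fin (M + n) => ¬ (z : ℕ) < M)).card = n := by
        have hmap : (Finset.univ.filter (fun z : Fin (M + n) => ¬ (z : ℕ) < M)) =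
            Finset.univ.map ⟨fun j : Fin n => (⟨M + (j : ℕ), by omega⟩ : Fin (M + n)),
              fun a b h => Fin.ext (by have := congrArg Fin.val h; simp at this; omega)⟩ := by
          ext z
          simp only [Finset.mem_filter, Finset.mem_univ, true_and, Finset.mem_map,
            Function.Embedding.coeFn_mk]
          constructor
          · intro hz
            refine ⟨⟨(z : ℕ) - M, by omega⟩, Fin.ext ?_⟩
            show M + ((z : ℕ) - M) = (z : ℕ); omega
          · rintro ⟨j, rfl⟩
            simp; exact Nat.le_add_right _ _
        rw [hmap, Finset.card_map, Finset.card_univ, Fintype.card_fin]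
      have hsT : s = Finset.univ.filter (fun z : Fin (M + n) => ¬ (z : ℕ) < M) := by
        apply Finset.eq_of_subset_of_card_le
        · intro z hz
          simp only [Finset.mem_filter, Finset.mem_univ, true_and]
          exact hNew z hz
        · rw [hTcard, hcard]
      have hmem : ∀ z : Fin (M + n), ¬ (z : ℕ) < M → z ∈ s := by
        intro z hz
        rw [hsT]
        simp only [Finset.mem_filter, Finset.mem_univ, true_and]
        omega
      have ha : (⟨M + 0, by omega⟩ : Fin (M + n)) ∈ s := hmem _ (by simp)
      have hb : (⟨M + 1, by omega⟩ : Fin (M + n)) ∈ s := hmem _ (by simp)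
      have hd : (⟨M + 2, by omega⟩ : Fin (M + n)) ∈ s := hmem _ (by simp)
      have h1 := hmono _ ha _ hb (by intro h; have := congrArg Fin.val h; simp at this)
      have h2 := hmono _ ha _ hd (by intro h; have := congrArg Fin.val h; simp at this)
      rw [badCol_nn M n r hr1 c0 _ _ (by simp) (by simp),
        if_pos (Or.inl ⟨by simp, rfl⟩)] at h1
      rw [badCol_nn M n r hr1 c0 _ _ (by simp) (by simp)] at h2
      rw [if_neg (by rintro (⟨hA, hB⟩ | ⟨hA, hB⟩) <;> simp at hA hB <;> omega)] at h2
      have := congrArg Fin.val (h1.trans h2.symm)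
      simp at this
    · push_neg at hNew
      obtain ⟨x, hx, hxM⟩ := hNew
      -- mixed: i must be colour r-1
      have hival : (i : ℕ) = r - 1 := by
        have hyM' : ¬ (y : ℕ) < M := by omega
        have hxyne : x ≠ y := by
          intro h; rw [h] at hxM; omega
        have h := hmono x hx y hy hxyne
        have h' := congrArg Fin.val h
        rw [badCol_on_val M n r hr1 c0 x y hxM hyM'] at h'
        omega
      -- but s contains two old or two new vertices
      have hsplit : (s.filter (fun z : Fin (M + n) => (z : ℕ) < M)).card +
          (s.filter (fun z : Fin (M + n) => ¬ (z : ℕ) < M)).card = s.card := by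
        simpa using Finset.card_filter_add_card_filter_not
          (s := s) (p := fun z : Fin (M + n) => (z : ℕ) < M)
      rcases (show 1 < (s.filter (fun z : Fin (M + n) => (z : ℕ) < M)).card ∨
          1 < (s.filter (fun z : Fin (M + n) => ¬ (z : ℕ) < M)).card by omega) with hc | hc
      · obtain ⟨u, hu, v, hv, huv⟩ := Finset.one_lt_card.mp hc
        simp only [Finset.mem_filter] at hu hv
        have h := hmono u hu.1 v hv.1 huv
        rw [badCol_oo M n r hr1 c0 u v hu.2 hv.2] at h
        have h' := congrArg Fin.val h
        simp only [Fin.coe_castLE] at h'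
        have := (c0 s(⟨u, hu.2⟩, ⟨v, hv.2⟩)).isLt
        omega
      · obtain ⟨u, hu, v, hv, huv⟩ := Finset.one_lt_card.mp hc
        simp only [Finset.mem_filter] at hu hv
        have h := hmono u hu.1 v hv.1 huv
        have h' := congrArg Fin.val h
        have := badCol_nn_le M n r hr1 c0 u v hu.2 hv.2
        omega

/-- For `n, r ≥ 3`, `R_r(n, …, n) ≥ R_{r-1}(n, …, n) + n`. -/
theorem stmt_5 (n r : ℕ) (hn : 3 ≤ n) (hr : 3 ≤ r) :
    ramseyNumber (fun _ : Fin (r - 1) => n) + n ≤ ramseyNumber (fun _ : Fin r => n) := by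
  obtain ⟨N₁, hN₁⟩ := exists_hasRamseyProp (r - 1) (fun _ => n)
  obtain ⟨N₂, hN₂⟩ := exists_hasRamseyProp r (fun _ => n)
  set R := ramseyNumber (fun _ : Fin (r - 1) => n) with hR
  have hinf : sInf {N | HasRamseyProp N (fun _ : Fin (r - 1) => n)} = R := rfl
  have hRpos : 1 ≤ R := by
    rcases Nat.eq_zero_or_pos R with h | h
    · exfalso
      rcases Nat.sInf_eq_zero.mp (hinf.trans h) with h0 | h0
      · exact not_hasRamseyProp_zero (by omega) (by omega) h0
      · have : N₁ ∈ {N | HasRamseyProp N (fun _ : Fin (r - 1) => n)} := hN₁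
        rw [h0] at this
        exact this
    · exact h
  have hM : (R - 1) ∉ {N | HasRamseyProp N (fun _ : Fin (r - 1) => n)} := by
    apply Nat.notMem_of_lt_sInf
    omega
  have hkey := key_not_ramsey (R - 1) n r hn hr hM
  rw [show ramseyNumber (fun _ : Fin r => n) =
    sInf {N | HasRamseyProp N (fun _ : Fin r => n)} from rfl]
  refine le_csInf ⟨N₂, hN₂⟩ ?_
  intro N hN
  by_contra hlt
  push_neg at hlt
  exact hkey (hasRamseyProp_mono hN (by omega))
end

section
/- Let G be a graph that is 3-Ramsey for K_3. If G contains a copy K of the complete graph K_6, then G contains a copy of K_3 that is vertex-disjoint from K. -/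
open SimpleGraph

open Classical in
private noncomputable def stmt11.finv {V : Type*} (f : Fin 6 → V) : V → Option (Fin 6) :=
  fun v => if h : ∃ a, f a = v then some h.choose else none

private def stmt11.cIn : Fin 6 → Fin 6 → Fin 3 :=
  fun a b => !![0,2,0,1,2,2; 2,0,2,0,0,1; 0,2,0,0,2,2; 1,0,0,0,1,1; 2,0,2,1,0,0; 2,1,2,1,0,0] a b

private def stmt11.chi : Fin 6 → Fin 3 := fun a => if a.val < 3 then 1 else 2

private lemma stmt11.cIn_symm : ∀ a b, stmt11.cIn a b = stmt11.cIn b a := by decide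

private lemma stmt11.cIn_noMono : ∀ a b c : Fin 6, a ≠ b → b ≠ c → a ≠ c →
    ¬ (stmt11.cIn a b = stmt11.cIn b c ∧ stmt11.cIn a b = stmt11.cIn a c) := by decide

private lemma stmt11.cIn_chi : ∀ a b : Fin 6, a ≠ b →
    ¬ (stmt11.chi a = stmt11.chi b ∧ stmt11.chi a = stmt11.cIn a b) := by decide

private lemma stmt11.chi_ne_zero : ∀ a : Fin 6, stmt11.chi a ≠ 0 := by decide

/-- Let `G` be `3`-Ramsey for `K_3`. If `G` contains a copy `f` of `K_6`,
then `G` contains a copy of `K_3` that is vertex-disjoint from it. -/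
theorem stmt_11 {V : Type*} (G : SimpleGraph V)
    (hG : IsRamseyFor 3 G (completeGraph (Fin 3)))
    (f : completeGraph (Fin 6) →g G) (hf : Function.Injective f) :
    ∃ g : completeGraph (Fin 3) →g G, Function.Injective g ∧ ∀ a b, g a ≠ f b := by
  classical
  set finv : V → Option (Fin 6) := stmt11.finv f with hfinvdef
  have hfinv_f : ∀ a, finv (f a) = some a := by
    intro a
    have h : ∃ b, f b = f a := ⟨a, rfl⟩
    simp only [hfinvdef, stmt11.finv, dif_pos h]
    exact congrArg some (hf h.choose_spec)
  have hfinv_some : ∀ v a, finv v = some a → v = f a := by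
    intro v a h
    by_cases hv : ∃ b, f b = v
    · simp only [hfinvdef, stmt11.finv, dif_pos hv, Option.some_inj] at h
      rw [← hv.choose_spec, h]
    · simp [hfinvdef, stmt11.finv, dif_neg hv] at h
  set F : V → V → Fin 3 := fun u v =>
    match finv u, finv v with
    | some a, some b => stmt11.cIn a b
    | some a, none => stmt11.chi a
    | none, some b => stmt11.chi b
    | none, none => 0
    with hFdef
  have hFsymm : ∀ u v, F u v = F v u := by
    intro u v
    simp only [hFdef]
    cases finv u <;> cases finv v <;> simp [stmt11.cIn_symm]
  obtain ⟨i, g, hginj, hmono⟩ := hG (Sym2.lift ⟨F, hFsymm⟩)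
  have hmono' : ∀ u v : Fin 3, u ≠ v → F (g u) (g v) = i := by
    intro u v huv
    have := hmono u v huv
    rwa [Sym2.lift_mk] at this
  have hne : ∀ (u v : Fin 3) (a b : Fin 6), u ≠ v → finv (g u) = some a →
      finv (g v) = some b → a ≠ b := by
    intro u v a b huv hu hv hab
    subst hab
    exact huv (hginj ((hfinv_some _ _ hu).trans (hfinv_some _ _ hv).symm))
  have key : ∀ k : Fin 3, finv (g k) = none := by
    have e01 := hmono' 0 1 (by decide)
    have e12 := hmono' 1 2 (by decide)
    have e02 := hmono' 0 2 (by decide)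
    rcases h0 : finv (g 0) with _ | a0 <;> rcases h1 : finv (g 1) with _ | a1 <;>
      rcases h2 : finv (g 2) with _ | a2 <;>
      simp only [hFdef, h0, h1, h2] at e01 e12 e02
    · intro k; fin_cases k <;> assumption
    · exact absurd (e12.trans e01.symm) (stmt11.chi_ne_zero a2)
    · exact absurd (e01.trans e02.symm) (stmt11.chi_ne_zero a1)
    · exact absurd ⟨e01.trans e02.symm, e01.trans e12.symm⟩
        (stmt11.cIn_chi a1 a2 (hne 1 2 a1 a2 (by decide) h1 h2))
    · exact absurd (e01.trans e12.symm) (stmt11.chi_ne_zero a0)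
    · exact absurd ⟨e01.trans e12.symm, e01.trans e02.symm⟩
        (stmt11.cIn_chi a0 a2 (hne 0 2 a0 a2 (by decide) h0 h2))
    · exact absurd ⟨e02.trans e12.symm, e02.trans e01.symm⟩
        (stmt11.cIn_chi a0 a1 (hne 0 1 a0 a1 (by decide) h0 h1))
    · exact absurd ⟨e01.trans e12.symm, e01.trans e02.symm⟩
        (stmt11.cIn_noMono a0 a1 a2 (hne 0 1 a0 a1 (by decide) h0 h1)
          (hne 1 2 a1 a2 (by decide) h1 h2) (hne 0 2 a0 a2 (by decide) h0 h2))
  refine ⟨g, hginj, fun a b hab => ?_⟩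
  have := key a
  rw [hab, hfinv_f] at this
  exact Option.some_ne_none b this
end
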